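/- Let E be a finite set of equations, Φ a set of faults, φ : E → Set Φ, F(M) = ⋃_{e∈M} φ(e), and 𝒯 a family of subsets of E containing ∅ and closed under arbitrary unions; for N ⊆ E let N* = ⋃{T ∈ 𝒯 : T ⊆ N}. Let M₀ ⊆ E and let M' be an RG set with M' ⊆ M₀. Then there exist k ∈ ℕ and a finite sequence N₀, N₁, …, N_k of subsets of E such that N₀ = M₀*, N_k = M', and for each i < k there exist e_i ∈ N_i and f_i ∈ φ(e_i) with f_i ∈ F(N_i) \ F(M') and N_{i+1} = (N_i \ {e_i})*; moreover M' ⊆ N_{i+1} ⊊ N_i for each i < k. -/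
import Mathlib


open Set

/-- The fault signature map: faults appearing in a set of equations. -/
def faultsOf {E Φ : Type*} (φ : E → Set Φ) (M : Set E) : Set Φ := ⋃ e ∈ M, φ e

/-- The operator `N*`: the largest member of 𝒯 contained in `N`, realized as the
union of all members of 𝒯 contained in `N`. -/
def star {E : Type*} (𝒯 : Set (Set E)) (N : Set E) : Set E :=
  ⋃₀ {T | T ∈ 𝒯 ∧ T ⊆ N}

/-- An RG set: a testable set with nonempty fault signature that contains every
testable set with the same fault signature. -/
def IsRGSet {E Φ : Type*} (φ : E → Set Φ) (𝒯 : Set (Set E)) (M : Set E) : Prop :=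
  M ∈ 𝒯 ∧ (faultsOf φ M).Nonempty ∧
    ∀ M'' ∈ 𝒯, faultsOf φ M'' = faultsOf φ M → M'' ⊆ M

/-- (Correctness of the algorithm.) For `E` finite, 𝒯 containing ∅
and closed under arbitrary unions, `M₀ ⊆ E`, and an RG set `M' ⊆ M₀`, there is a
finite chain `N₀ = M₀*, N₁, …, N_k = M'` where each step removes an equation `eᵢ ∈ Nᵢ`
carrying a fault `fᵢ ∈ F(Nᵢ) \ F(M')` and takes the star, with
`M' ⊆ N_{i+1} ⊊ Nᵢ` at each step. -/
theorem stmt9_algorithm_reaches_every_RG_set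
    {E Φ : Type*} [Finite E] (φ : E → Set Φ) (𝒯 : Set (Set E))
    (hempty : (∅ : Set E) ∈ 𝒯)
    (hclosed : ∀ 𝒞 ⊆ 𝒯, ⋃₀ 𝒞 ∈ 𝒯)
    (M₀ : Set E) (M' : Set E) (hM' : IsRGSet φ 𝒯 M') (hsub : M' ⊆ M₀) :
    ∃ (k : ℕ) (N : ℕ → Set E),
      N 0 = star 𝒯 M₀ ∧ N k = M' ∧
      (∀ i < k, ∃ e ∈ N i, ∃ f ∈ φ e,
        f ∈ faultsOf φ (N i) \ faultsOf φ M' ∧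
        N (i + 1) = star 𝒯 (N i \ {e})) ∧
      (∀ i < k, M' ⊆ N (i + 1) ∧ N (i + 1) ⊂ N i) := by
  obtain ⟨hM'T, hFne, hmax⟩ := hM'
  have hstar_mem : ∀ N : Set E, star 𝒯 N ∈ 𝒯 := fun N =>
    hclosed _ (fun T hT => hT.1)
  have hstar_sub : ∀ N : Set E, star 𝒯 N ⊆ N := fun N x hx => by
    obtain ⟨T, ⟨_, hTN⟩, hxT⟩ := hx; exact hTN hxT
  have hsub_star : ∀ T N : Set E, T ∈ 𝒯 → T ⊆ N → T ⊆ star 𝒯 N :=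
    fun T N hT hTN x hx => ⟨T, ⟨hT, hTN⟩, hx⟩
  have main : ∀ n : ℕ, ∀ N : Set E, N ∈ 𝒯 → M' ⊆ N → N.ncard ≤ n →
      ∃ (k : ℕ) (Ns : ℕ → Set E), Ns 0 = N ∧ Ns k = M' ∧
      (∀ i < k, ∃ e ∈ Ns i, ∃ f ∈ φ e,
        f ∈ faultsOf φ (Ns i) \ faultsOf φ M' ∧
        Ns (i + 1) = star 𝒯 (Ns i \ {e})) ∧
      (∀ i < k, M' ⊆ Ns (i + 1) ∧ Ns (i + 1) ⊂ Ns i) := by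
    intro n
    induction n with
    | zero =>
      intro N hNT hMN hcard
      have hN0 : N = ∅ := by
        have := Set.ncard_eq_zero (Set.toFinite N) |>.mp (Nat.le_zero.mp hcard)
        exact this
      exfalso
      have : M' = ∅ := Set.subset_empty_iff.mp (hN0 ▸ hMN)
      rcases hFne with ⟨f, hf⟩
      rw [this] at hf
      simp [faultsOf] at hf
    | succ n ih =>
      intro N hNT hMN hcard
      by_cases hNe : N = M'
      · exact ⟨0, fun _ => M', by simp [hNe], rfl, by simp, by simp⟩
      · have hFsub : faultsOf φ M' ⊆ faultsOf φ N := by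
          intro f hf
          simp only [faultsOf, Set.mem_iUnion] at hf ⊢
          obtain ⟨e, he, hfe⟩ := hf
          exact ⟨e, hMN he, hfe⟩
        have hFne' : faultsOf φ N ≠ faultsOf φ M' := fun h =>
          hNe (Set.Subset.antisymm (hmax N hNT h) hMN)
        obtain ⟨f, hfN, hfM'⟩ : ∃ f, f ∈ faultsOf φ N ∧ f ∉ faultsOf φ M' := by
          by_contra h
          push_neg at h
          exact hFne' (Set.Subset.antisymm (fun f hf => h f hf) hFsub)
        obtain ⟨e, heN, hfe⟩ : ∃ e ∈ N, f ∈ φ e := by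
          simpa [faultsOf] using hfN
        have heM' : e ∉ M' := fun h => hfM' (by
          simp only [faultsOf, Set.mem_iUnion]; exact ⟨e, h, hfe⟩)
        set N' := star 𝒯 (N \ {e}) with hN'def
        have hN'T : N' ∈ 𝒯 := hstar_mem _
        have hMN' : M' ⊆ N' := hsub_star _ _ hM'T
          (Set.subset_diff_singleton hMN heM')
        have hN'ss : N' ⊂ N := by
          refine ⟨(hstar_sub _).trans Set.diff_subset, fun h => ?_⟩
          have : e ∈ N \ {e} := hstar_sub _ (h heN)
          simp at this
        have hcard' : N'.ncard ≤ n := by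
          have := Set.ncard_lt_ncard hN'ss (Set.toFinite N)
          omega
        obtain ⟨k, Ns', h0, hk, hstep, hmono⟩ := ih N' hN'T hMN' hcard'
        refine ⟨k + 1, fun i => if i = 0 then N else Ns' (i - 1), by simp, by
          simpa using hk, ?_, ?_⟩
        · intro i hi
          match i with
          | 0 =>
            refine ⟨e, heN, f, hfe, ⟨hfN, hfM'⟩, ?_⟩
            simpa [hN'def] using h0
          | j + 1 =>
            have hj : j < k := by omega
            obtain ⟨e', he', f', hf', hmem, heq⟩ := hstep j hj
            exact ⟨e', by simpa using he', f', hf', by simpa using hmem, by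
              simpa using heq⟩
        · intro i hi
          match i with
          | 0 =>
            constructor
            · simpa [h0] using hMN'
            · simpa [h0] using hN'ss
          | j + 1 =>
            have hj : j < k := by omega
            have := hmono j hj
            simpa using this
  have h1 : star 𝒯 M₀ ∈ 𝒯 := hstar_mem _
  have h2 : M' ⊆ star 𝒯 M₀ := hsub_star _ _ hM'T hsub
  exact main (star 𝒯 M₀).ncard _ h1 h2 le_rfl
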